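/- Let (U_k)_{k≥0} be nonnegative reals with U_0 = 0 and U_{i+j} ≤ C₁ U_i + C₂ U_j for all i,j. If Σ_{k=1}^∞ k^{-p} U_k < ∞ for some p > 1, then m^{-(p-1)} Σ_{j≥1} j^{-p} U_{jm} → 0 as m → ∞; in particular U_m / m^{p-1} → 0 as m → ∞. -/

import Mathlib

open Filter Finset

/-- Lemma (Appendix, part 2): if `(U_k)` are nonnegative reals with `U 0 = 0`,
`U (i+j) ≤ C₁ U i + C₂ U j`, and `Σ_{k≥1} k^{-p} U k < ∞` for some `p > 1`, then
`m^{-(p-1)} Σ_{j≥1} j^{-p} U (j m) → 0` as `m → ∞`; in particular `U m / m^{p-1} → 0`. -/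
theorem stmt_5 (U : ℕ → ℝ) (hUnonneg : ∀ n, 0 ≤ U n) (hU0 : U 0 = 0)
    (C₁ C₂ : ℝ) (hC₁ : 0 < C₁) (hC₂ : 0 < C₂)
    (hsub : ∀ i j : ℕ, U (i + j) ≤ C₁ * U i + C₂ * U j)
    (p : ℝ) (hp : 1 < p)
    (hsum : Summable (fun k : ℕ => U (k + 1) / ((k : ℝ) + 1) ^ p)) :
    Tendsto (fun m : ℕ =>
        (1 / (m : ℝ) ^ (p - 1)) * ∑' j : ℕ, U ((j + 1) * m) / ((j : ℝ) + 1) ^ p)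
      atTop (nhds 0) ∧
    Tendsto (fun m : ℕ => U m / (m : ℝ) ^ (p - 1)) atTop (nhds 0) := by
  have hppos : (0:ℝ) < p := by linarith
  set g : ℕ → ℝ := fun k => U (k+1) / ((k:ℝ)+1)^p with hgdef
  have hgnonneg : ∀ k, 0 ≤ g k := fun k =>
    div_nonneg (hUnonneg _) (Real.rpow_nonneg (by positivity) p)
  have hgsum : Summable g := hsum
  have hUg : ∀ l : ℕ, U (l+1) = ((l:ℝ)+1)^p * g l := by
    intro l
    have hne : ((l:ℝ)+1)^p ≠ 0 := by positivity
    show U (l+1) = ((l:ℝ)+1)^p * (U (l+1) / ((l:ℝ)+1)^p)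
    field_simp
  -- U (l+1) ≤ M^p * g l whenever l+1 ≤ M
  have hUV : ∀ l M : ℕ, l + 1 ≤ M → U (l+1) ≤ (M:ℝ)^p * g l := by
    intro l M hlM
    rw [hUg l]
    apply mul_le_mul_of_nonneg_right _ (hgnonneg l)
    apply Real.rpow_le_rpow (by positivity) _ hppos.le
    exact_mod_cast hlM
  -- tails of g
  set tg : ℕ → ℝ := fun n => ∑' k, g (k + n) with htgdef
  have hshift : ∀ n, Summable (fun k => g (k + n)) := fun n => (summable_nat_add_iff n).2 hgsum
  have htgnonneg : ∀ n, 0 ≤ tg n := fun n => tsum_nonneg (fun k => hgnonneg _)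
  have htgto : Tendsto tg atTop (nhds 0) := by
    have hps := hgsum.hasSum.tendsto_sum_nat
    have heq : ∀ n, tg n = (∑' k, g k) - ∑ i ∈ range n, g i := by
      intro n
      have h := hgsum.sum_add_tsum_nat_add n
      show (∑' (k : ℕ), g (k + n)) = (∑' k, g k) - ∑ i ∈ range n, g i
      linarith
    have h4 : Tendsto (fun n => (∑' k, g k) - ∑ i ∈ range n, g i) atTop (nhds 0) := by
      have : Tendsto (fun n => (∑' k, g k) - ∑ i ∈ range n, g i) atTop
          (nhds ((∑' k, g k) - ∑' k, g k)) := tendsto_const_nhds.sub hps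
      simpa using this
    exact Tendsto.congr (fun n => (heq n).symm) h4
  -- partial sums of U
  set V : ℕ → ℝ := fun M => ∑ k ∈ range M, U k with hVdef
  have hVnonneg : ∀ M, 0 ≤ V M := fun M => Finset.sum_nonneg fun k _ => hUnonneg k
  have hVmono : ∀ {M N : ℕ}, M ≤ N → V M ≤ V N := by
    intro M N h
    exact Finset.sum_le_sum_of_subset_of_nonneg (Finset.range_subset_range.2 h)
      (fun k _ _ => hUnonneg k)
  have hrpowTop : Tendsto (fun M : ℕ => (M:ℝ)^p) atTop atTop :=
    (tendsto_rpow_atTop hppos).comp tendsto_natCast_atTop_atTop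
  -- Lemma B : V (M+1) / M^p → 0
  have auxV : Tendsto (fun M : ℕ => V (M+1) / (M:ℝ)^p) atTop (nhds 0) := by
    rw [Metric.tendsto_atTop]
    intro ε hε
    obtain ⟨K, hK⟩ := Metric.tendsto_atTop.1 htgto (ε/2) (by linarith)
    have htgK : tg K < ε/2 := by
      have := hK K le_rfl
      rw [Real.dist_eq, sub_zero] at this
      calc tg K ≤ |tg K| := le_abs_self _
        _ < ε/2 := this
    have hconst : Tendsto (fun M : ℕ => V (K+1) / (M:ℝ)^p) atTop (nhds 0) :=
      Tendsto.div_atTop tendsto_const_nhds hrpowTop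
    obtain ⟨M₀, hM₀⟩ := Metric.tendsto_atTop.1 hconst (ε/2) (by linarith)
    refine ⟨max (K+1) M₀, fun M hM => ?_⟩
    have hMK : K + 1 ≤ M := le_trans (le_max_left _ _) hM
    have hMM₀ : M₀ ≤ M := le_trans (le_max_right _ _) hM
    have hM1 : 1 ≤ M := by omega
    have hMp : (0:ℝ) < (M:ℝ)^p := by
      apply Real.rpow_pos_of_pos; exact_mod_cast hM1
    have hsplit : V (M+1) = V (K+1) + ∑ i ∈ Finset.Ico (K+1) (M+1), U i := by
      simp only [hVdef]
      exact (Finset.sum_range_add_sum_Ico U (by omega)).symm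
    have hmid : ∑ i ∈ Finset.Ico (K+1) (M+1), U i ≤ (M:ℝ)^p * tg K := by
      rw [Finset.sum_Ico_eq_sum_range]
      have h1 : ∀ i ∈ range (M+1-(K+1)), U (K+1+i) ≤ (M:ℝ)^p * g (i + K) := by
        intro i hi
        rw [mem_range] at hi
        have heq2 : K + 1 + i = (i + K) + 1 := by omega
        rw [heq2]
        exact hUV (i+K) M (by omega)
      calc ∑ i ∈ range (M+1-(K+1)), U (K+1+i)
          ≤ ∑ i ∈ range (M+1-(K+1)), (M:ℝ)^p * g (i + K) := Finset.sum_le_sum h1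
        _ = (M:ℝ)^p * ∑ i ∈ range (M+1-(K+1)), g (i + K) := by rw [Finset.mul_sum]
        _ ≤ (M:ℝ)^p * tg K := by
            apply mul_le_mul_of_nonneg_left _ hMp.le
            exact Summable.sum_le_tsum _ (fun k _ => hgnonneg _) (hshift K)
    have hVbound : V (M+1) / (M:ℝ)^p ≤ V (K+1) / (M:ℝ)^p + tg K := by
      rw [hsplit, add_div]
      gcongr
      rw [div_le_iff₀ hMp]
      linarith [hmid]
    have hVK : V (K+1) / (M:ℝ)^p < ε/2 := by
      have := hM₀ M hMM₀
      rw [Real.dist_eq, sub_zero] at this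
      calc V (K+1) / (M:ℝ)^p ≤ |V (K+1) / (M:ℝ)^p| := le_abs_self _
        _ < ε/2 := this
    rw [Real.dist_eq, sub_zero, abs_of_nonneg (div_nonneg (hVnonneg _) hMp.le)]
    linarith
  -- averaging inequality
  have havg : ∀ m N : ℕ, 0 < m → m ≤ N →
      (m:ℝ) * U N ≤ C₁ * ∑ r ∈ range m, U (N - r) + C₂ * V m := by
    intro m N hm hmN
    have h1 : (m:ℝ) * U N = ∑ _r ∈ range m, U N := by
      rw [Finset.sum_const, card_range, nsmul_eq_mul]
    rw [h1, hVdef]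
    have h2 : ∀ r ∈ range m, U N ≤ C₁ * U (N - r) + C₂ * U r := by
      intro r hr
      rw [mem_range] at hr
      have := hsub (N - r) r
      rwa [Nat.sub_add_cancel (by omega)] at this
    calc ∑ _r ∈ range m, U N ≤ ∑ r ∈ range m, (C₁ * U (N - r) + C₂ * U r) :=
          Finset.sum_le_sum h2
      _ = C₁ * ∑ r ∈ range m, U (N - r) + C₂ * ∑ r ∈ range m, U r := by
          rw [Finset.sum_add_distrib, Finset.mul_sum, Finset.mul_sum]
  -- Part 2 bound
  have hpart2bound : ∀ m : ℕ, 1 ≤ m →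
      U m / (m:ℝ)^(p-1) ≤ (C₁ + C₂) * (V (m+1) / (m:ℝ)^p) := by
    intro m hm
    have hm0 : (0:ℝ) < m := by exact_mod_cast hm
    have h1 := havg m m hm (le_refl m)
    have hre : ∑ r ∈ range m, U (m - r) = ∑ i ∈ range m, U (i + 1) := by
      rw [← Finset.sum_range_reflect (fun r => U (m - r)) m]
      apply Finset.sum_congr rfl
      intro i hi
      rw [mem_range] at hi
      congr 1
      omega
    have h2 : ∑ i ∈ range m, U (i + 1) ≤ V (m+1) := by
      simp only [hVdef, Finset.sum_range_succ']
      simp [hU0]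
    have h3 : V m ≤ V (m+1) := hVmono (Nat.le_succ m)
    have hkey : (m:ℝ) * U m ≤ (C₁ + C₂) * V (m+1) := by
      rw [hre] at h1
      nlinarith [h1, h2, h3]
    have hmp : (0:ℝ) < (m:ℝ)^p := Real.rpow_pos_of_pos hm0 p
    have hmp1 : (0:ℝ) < (m:ℝ)^(p-1) := Real.rpow_pos_of_pos hm0 (p-1)
    have hsplitpow : (m:ℝ)^p = (m:ℝ)^(p-1) * m := by
      have h := Real.rpow_add hm0 (p-1) 1
      rw [Real.rpow_one] at h
      have hpe : p - 1 + 1 = p := by ring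
      rw [hpe] at h
      exact h
    rw [div_le_iff₀ hmp1]
    have hre2 : (C₁ + C₂) * (V (m+1) / (m:ℝ)^p) * (m:ℝ)^(p-1) = (C₁ + C₂) * V (m+1) / m := by
      rw [hsplitpow]
      field_simp
    rw [hre2, le_div_iff₀ hm0]
    calc U m * (m:ℝ) = (m:ℝ) * U m := mul_comm _ _
      _ ≤ (C₁ + C₂) * V (m+1) := hkey
  -- Part 2
  have part2 : Tendsto (fun m : ℕ => U m / (m : ℝ) ^ (p - 1)) atTop (nhds 0) := by
    have hub : Tendsto (fun m : ℕ => (C₁ + C₂) * (V (m+1) / (m:ℝ)^p)) atTop (nhds 0) := by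
      have := auxV.const_mul (C₁ + C₂)
      simpa using this
    apply tendsto_of_tendsto_of_tendsto_of_le_of_le' tendsto_const_nhds hub
    · filter_upwards with m
      exact div_nonneg (hUnonneg m) (Real.rpow_nonneg (Nat.cast_nonneg m) _)
    · filter_upwards [eventually_ge_atTop 1] with m hm
      exact hpart2bound m hm
  refine ⟨?_, part2⟩
  -- constant Z
  have hhsum : Summable (fun n : ℕ => 1/((n:ℝ)+1)^p) := by
    have h := Real.summable_one_div_nat_rpow.2 hp
    have := (summable_nat_add_iff 1).2 h
    refine this.congr fun n => by push_cast; ring_nf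
  set Z : ℝ := ∑' n : ℕ, 1/((n:ℝ)+1)^p with hZdef
  have hZnonneg : 0 ≤ Z := tsum_nonneg fun n => by positivity
  -- main partial sum bound for fixed m ≥ 1
  have hmain : ∀ m : ℕ, 1 ≤ m → ∀ J : ℕ,
      ∑ j ∈ range J, U ((j + 1) * m) / ((j : ℝ) + 1) ^ p
        ≤ U m + (m:ℝ)^(p-1) * (C₁ * tg m + C₂ * Z * (V m / (m:ℝ)^p)) := by
    intro m hm J
    have hm0 : (0:ℝ) < m := by exact_mod_cast hm
    have hmp : (0:ℝ) < (m:ℝ)^p := Real.rpow_pos_of_pos hm0 p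
    have hmp1 : (0:ℝ) < (m:ℝ)^(p-1) := Real.rpow_pos_of_pos hm0 (p-1)
    have hVm := hVnonneg m
    have htgm := htgnonneg m
    have hRHSinner : 0 ≤ C₁ * tg m + C₂ * Z * (V m / (m:ℝ)^p) :=
      add_nonneg (mul_nonneg hC₁.le htgm)
        (mul_nonneg (mul_nonneg hC₂.le hZnonneg) (div_nonneg hVm hmp.le))
    have hsplitpow : (m:ℝ)^p = (m:ℝ)^(p-1) * m := by
      have h := Real.rpow_add hm0 (p-1) 1
      rw [Real.rpow_one] at h
      have hpe : p - 1 + 1 = p := by ring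
      rw [hpe] at h
      exact h
    cases J with
    | zero =>
      simp only [range_zero, Finset.sum_empty]
      exact add_nonneg (hUnonneg m) (mul_nonneg hmp1.le hRHSinner)
    | succ J' =>
      rw [Finset.sum_range_succ']
      have ha0 : U ((0 + 1) * m) / (((0:ℕ) : ℝ) + 1) ^ p = U m := by
        norm_num [Real.one_rpow]
      rw [ha0]
      set B : ℕ → ℝ := fun j => ∑ i ∈ range m, g (j * m + i + m) with hBdef
      have hBnonneg : ∀ j, 0 ≤ B j := fun j => Finset.sum_nonneg fun i _ => hgnonneg _
      -- per-j bound
      have hperj : ∀ j : ℕ, U ((j + 1 + 1) * m) / (((j + 1 : ℕ) : ℝ) + 1) ^ p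
          ≤ (m:ℝ)^(p-1) * (C₁ * B j + C₂ * (V m / (m:ℝ)^p) * (1/((j:ℝ)+2)^p)) := by
        intro j
        set N : ℕ := (j + 2) * m with hNdef
        have hNm : m ≤ N := by
          calc m = 1 * m := (one_mul m).symm
            _ ≤ (j+2) * m := Nat.mul_le_mul_right m (by omega)
        have hN1 : 1 ≤ N := le_trans hm hNm
        have hNpos : (0:ℝ) < (N:ℝ) := by exact_mod_cast hN1
        have hNp : (0:ℝ) < (N:ℝ)^p := Real.rpow_pos_of_pos hNpos p
        have hjp : (0:ℝ) < ((j:ℝ)+2)^p := by positivity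
        have hblock : ∑ r ∈ range m, U (N - r) ≤ (N:ℝ)^p * B j := by
          have hre : ∑ r ∈ range m, U (N - r) = ∑ i ∈ range m, U ((j*m + i + m) + 1) := by
            rw [← Finset.sum_range_reflect (fun r => U (N - r)) m]
            apply Finset.sum_congr rfl
            intro i hi
            rw [mem_range] at hi
            congr 1
            have hNe : N = j*m + m + m := by rw [hNdef]; ring
            omega
          rw [hre]
          have h1 : ∀ i ∈ range m, U ((j*m + i + m) + 1) ≤ (N:ℝ)^p * g (j*m + i + m) := by
            intro i hi
            rw [mem_range] at hi
            apply hUV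
            have hNe : N = j*m + (m + m) := by rw [hNdef]; ring
            rw [hNe]
            have hassoc : j*m + i + m + 1 = j*m + (i + m + 1) := by ring
            rw [hassoc]
            exact Nat.add_le_add_left (by omega) _
          calc ∑ i ∈ range m, U ((j*m + i + m) + 1)
              ≤ ∑ i ∈ range m, (N:ℝ)^p * g (j*m + i + m) := Finset.sum_le_sum h1
            _ = (N:ℝ)^p * B j := by rw [hBdef, Finset.mul_sum]
        have hkey : (m:ℝ) * U N ≤ C₁ * ((N:ℝ)^p * B j) + C₂ * V m := by
          have h0 := havg m N hm hNm
          have hC₁B := mul_le_mul_of_nonneg_left hblock hC₁.le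
          linarith
        have hNr : (N:ℝ)^p = ((j:ℝ)+2)^p * (m:ℝ)^p := by
          have hcast : ((N:ℕ):ℝ) = ((j:ℝ)+2) * (m:ℝ) := by
            rw [hNdef]; push_cast; ring
          rw [hcast, Real.mul_rpow (by positivity) (by positivity)]
        have hLcast : (((j + 1 : ℕ) : ℝ) + 1) = ((j:ℝ)+2) := by push_cast; ring
        rw [hLcast, div_le_iff₀ hjp]
        have hexpand : (m:ℝ)^(p-1) * (C₁ * B j + C₂ * (V m / (m:ℝ)^p) * (1/((j:ℝ)+2)^p))
            * ((j:ℝ)+2)^p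
            = (m:ℝ)^(p-1) * (C₁ * B j * ((j:ℝ)+2)^p + C₂ * (V m / (m:ℝ)^p)) := by
          field_simp
        rw [hexpand]
        have heq : (m:ℝ)^(p-1) * (C₁ * B j * ((j:ℝ)+2)^p + C₂ * (V m / (m:ℝ)^p)) * (m:ℝ)
            = C₁ * ((N:ℝ)^p * B j) + C₂ * V m := by
          rw [hNr, hsplitpow]
          field_simp
        have hUN : U N * (m:ℝ)
            ≤ (m:ℝ)^(p-1) * (C₁ * B j * ((j:ℝ)+2)^p + C₂ * (V m / (m:ℝ)^p)) * (m:ℝ) := by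
          rw [heq]; linarith [hkey]
        exact le_of_mul_le_mul_right hUN hm0
      -- sum the per-j bounds
      have hBsum : ∑ j ∈ range J', B j ≤ tg m := by
        have hprod : ∑ x ∈ (range J' ×ˢ range m), g (x.1 * m + x.2 + m)
            = ∑ j ∈ range J', B j := by
          rw [Finset.sum_product]
        have hinj : ∀ x ∈ range J' ×ˢ range m, ∀ y ∈ range J' ×ˢ range m,
            (fun x : ℕ × ℕ => x.1 * m + x.2) x = (fun x : ℕ × ℕ => x.1 * m + x.2) y →
            x = y := by
          intro x hx y hy hxy
          simp only [mem_product, mem_range] at hx hy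
          simp only at hxy
          have e1 : (x.1 * m + x.2) / m = x.1 := by
            rw [mul_comm, Nat.mul_add_div (by omega)]
            simp [Nat.div_eq_of_lt hx.2]
          have e2 : (y.1 * m + y.2) / m = y.1 := by
            rw [mul_comm, Nat.mul_add_div (by omega)]
            simp [Nat.div_eq_of_lt hy.2]
          have d1 : x.1 = y.1 := by rw [← e1, ← e2, hxy]
          have d2 : x.2 = y.2 := by
            have h' := hxy
            rw [d1] at h'
            exact Nat.add_left_cancel h'
          exact Prod.ext d1 d2
        calc ∑ j ∈ range J', B j
            = ∑ x ∈ (range J' ×ˢ range m), g ((x.1 * m + x.2) + m) := hprod.symm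
          _ = ∑ k ∈ (range J' ×ˢ range m).image (fun x : ℕ × ℕ => x.1 * m + x.2),
              g (k + m) := by rw [Finset.sum_image hinj]
          _ ≤ tg m := Summable.sum_le_tsum _ (fun k _ => hgnonneg _) (hshift m)
      have hZsum : ∑ j ∈ range J', 1/((j:ℝ)+2)^p ≤ Z := by
        have hcong : ∀ j ∈ range J',
            1/((j:ℝ)+2)^p = (fun n : ℕ => 1/((n:ℝ)+1)^p) (j+1) := by
          intro j _
          push_cast
          ring_nf
        rw [Finset.sum_congr rfl hcong]
        have hstep : ∑ j ∈ range J', (fun n : ℕ => 1/((n:ℝ)+1)^p) (j+1)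
            ≤ ∑ j ∈ range (J'+1), (fun n : ℕ => 1/((n:ℝ)+1)^p) j := by
          rw [Finset.sum_range_succ']
          have : (0:ℝ) ≤ (fun n : ℕ => 1/((n:ℝ)+1)^p) 0 := by positivity
          linarith
        calc _ ≤ ∑ j ∈ range (J'+1), (fun n : ℕ => 1/((n:ℝ)+1)^p) j := hstep
          _ ≤ Z := Summable.sum_le_tsum _ (fun n _ => by positivity) hhsum
      have hsum2 : ∑ j ∈ range J', U ((j + 1 + 1) * m) / (((j + 1 : ℕ) : ℝ) + 1) ^ p
          ≤ (m:ℝ)^(p-1) * (C₁ * tg m + C₂ * Z * (V m / (m:ℝ)^p)) := by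
        calc ∑ j ∈ range J', U ((j + 1 + 1) * m) / (((j + 1 : ℕ) : ℝ) + 1) ^ p
            ≤ ∑ j ∈ range J',
              (m:ℝ)^(p-1) * (C₁ * B j + C₂ * (V m / (m:ℝ)^p) * (1/((j:ℝ)+2)^p)) :=
              Finset.sum_le_sum fun j _ => hperj j
          _ = (m:ℝ)^(p-1) * C₁ * ∑ j ∈ range J', B j
              + (m:ℝ)^(p-1) * C₂ * (V m / (m:ℝ)^p) * ∑ j ∈ range J', 1/((j:ℝ)+2)^p := by
              rw [Finset.mul_sum, Finset.mul_sum, ← Finset.sum_add_distrib]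
              apply Finset.sum_congr rfl
              intro j _
              ring
          _ ≤ (m:ℝ)^(p-1) * C₁ * tg m
              + (m:ℝ)^(p-1) * C₂ * (V m / (m:ℝ)^p) * Z := by
              have t1 : (m:ℝ)^(p-1) * C₁ * ∑ j ∈ range J', B j
                  ≤ (m:ℝ)^(p-1) * C₁ * tg m :=
                mul_le_mul_of_nonneg_left hBsum (mul_nonneg hmp1.le hC₁.le)
              have hZs : (0:ℝ) ≤ (m:ℝ)^(p-1) * C₂ * (V m / (m:ℝ)^p) :=
                mul_nonneg (mul_nonneg hmp1.le hC₂.le) (div_nonneg hVm hmp.le)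
              have t2 : (m:ℝ)^(p-1) * C₂ * (V m / (m:ℝ)^p) * ∑ j ∈ range J', 1/((j:ℝ)+2)^p
                  ≤ (m:ℝ)^(p-1) * C₂ * (V m / (m:ℝ)^p) * Z :=
                mul_le_mul_of_nonneg_left hZsum hZs
              linarith
          _ = (m:ℝ)^(p-1) * (C₁ * tg m + C₂ * Z * (V m / (m:ℝ)^p)) := by ring
      linarith [hsum2]
  -- assemble part 1
  have hanonneg : ∀ m : ℕ, ∀ j : ℕ, 0 ≤ U ((j+1)*m) / ((j:ℝ)+1)^p := fun m j =>
    div_nonneg (hUnonneg _) (by positivity)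
  have hFbound : ∀ m : ℕ, 1 ≤ m →
      (1 / (m:ℝ)^(p-1)) * ∑' j : ℕ, U ((j+1)*m) / ((j:ℝ)+1)^p
        ≤ U m / (m:ℝ)^(p-1) + (C₁ * tg m + C₂ * Z * (V m / (m:ℝ)^p)) := by
    intro m hm
    have hm0 : (0:ℝ) < m := by exact_mod_cast hm
    have hmp1 : (0:ℝ) < (m:ℝ)^(p-1) := Real.rpow_pos_of_pos hm0 _
    have htsum := Real.tsum_le_of_sum_range_le (hanonneg m) (hmain m hm)
    calc (1 / (m:ℝ)^(p-1)) * ∑' j : ℕ, U ((j+1)*m) / ((j:ℝ)+1)^p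
        ≤ (1 / (m:ℝ)^(p-1)) *
          (U m + (m:ℝ)^(p-1) * (C₁ * tg m + C₂ * Z * (V m / (m:ℝ)^p))) :=
          mul_le_mul_of_nonneg_left htsum (by positivity)
      _ = U m / (m:ℝ)^(p-1) + (C₁ * tg m + C₂ * Z * (V m / (m:ℝ)^p)) := by
          field_simp
  -- V m / m^p → 0
  have hVto : Tendsto (fun m : ℕ => V m / (m:ℝ)^p) atTop (nhds 0) := by
    apply tendsto_of_tendsto_of_tendsto_of_le_of_le' tendsto_const_nhds auxV
    · filter_upwards with m
      exact div_nonneg (hVnonneg m) (Real.rpow_nonneg (Nat.cast_nonneg m) _)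
    · filter_upwards [eventually_ge_atTop 1] with m hm
      have hm0 : (0:ℝ) < m := by exact_mod_cast hm
      have hmp : (0:ℝ) < (m:ℝ)^p := Real.rpow_pos_of_pos hm0 p
      gcongr
      exact hVmono (Nat.le_succ m)
  -- upper bound function tends to 0
  have hD : Tendsto (fun m : ℕ =>
      U m / (m:ℝ)^(p-1) + (C₁ * tg m + C₂ * Z * (V m / (m:ℝ)^p))) atTop (nhds 0) := by
    have h1 := htgto.const_mul C₁
    have h2 := hVto.const_mul (C₂ * Z)
    have h3 := part2.add (h1.add h2)
    simp only [mul_zero, add_zero] at h3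
    exact h3.congr fun m => by ring
  apply tendsto_of_tendsto_of_tendsto_of_le_of_le' tendsto_const_nhds hD
  · filter_upwards with m
    exact mul_nonneg (by positivity) (tsum_nonneg (hanonneg m))
  · filter_upwards [eventually_ge_atTop 1] with m hm
    exact hFbound m hm
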